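/- Let g satisfy Assumption B. Then there exists s₀ ≥ 0 such that for every s > s₀ there is u₀(s) > 0 such that for all q ∈ ℝ, every global minimizer u of h_{q,s}(u) := −q·u + ½u² + s·g(u) satisfies u = 0 or |u| ≥ u₀(s); if g satisfies (B3.b) or (B3.c), then s₀ can be chosen to be 0. Moreover, for every s > 0 there is q₀(s) > 0 such that u = 0 is a global minimizer of h_{q,s} if and only if |q| ≤ q₀(s), and u = 0 is the unique global minimizer whenever |q| < q₀(s). -/

import Mathlib

open Filter

/-- The function `h_{q,s}(v) := −q·v + ½v² + s·g(v)`, with `g : ℝ → ℝ ∪ {+∞}`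
modeled as `EReal`-valued. -/
noncomputable def hfun (g : ℝ → EReal) (s q v : ℝ) : EReal :=
  ((-q * v + v ^ 2 / 2 : ℝ) : EReal) + (s : EReal) * g v

/-- Assumption (B3.a): `g` is twice differentiable on some interval `(0, ε)` and
`limsup_{u↘0} g''(u) ∈ (−∞, 0)`. -/
def AssB3a (g : ℝ → EReal) : Prop :=
  ∃ ε : ℝ, 0 < ε ∧ ∃ gr g1 g2 : ℝ → ℝ,
    (∀ u ∈ Set.Ioo (0:ℝ) ε, g u = ((gr u : ℝ) : EReal)) ∧
    (∀ u ∈ Set.Ioo (0:ℝ) ε, HasDerivAt gr (g1 u) u) ∧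
    (∀ u ∈ Set.Ioo (0:ℝ) ε, HasDerivAt g1 (g2 u) u) ∧
    Filter.limsup (fun u => ((g2 u : ℝ) : EReal)) (nhdsWithin 0 (Set.Ioi (0:ℝ)))
      ∈ Set.Ioo (⊥ : EReal) (0 : EReal)

/-- Assumption (B3.b): `g` is twice differentiable on some interval `(0, ε)` and
`lim_{u↘0} g''(u) = −∞`. -/
def AssB3b (g : ℝ → EReal) : Prop :=
  ∃ ε : ℝ, 0 < ε ∧ ∃ gr g1 g2 : ℝ → ℝ,
    (∀ u ∈ Set.Ioo (0:ℝ) ε, g u = ((gr u : ℝ) : EReal)) ∧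
    (∀ u ∈ Set.Ioo (0:ℝ) ε, HasDerivAt gr (g1 u) u) ∧
    (∀ u ∈ Set.Ioo (0:ℝ) ε, HasDerivAt g1 (g2 u) u) ∧
    Filter.Tendsto g2 (nhdsWithin 0 (Set.Ioi (0:ℝ))) Filter.atBot

/-- Assumption (B3.c): `liminf_{u↘0} g(u) > 0`. -/
def AssB3c (g : ℝ → EReal) : Prop :=
  0 < Filter.liminf g (nhdsWithin 0 (Set.Ioi (0:ℝ)))

lemma hfun_eq_real (g : ℝ → EReal) (s q v r : ℝ) (hv : g v = (r : EReal)) :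
    hfun g s q v = ((-q * v + v ^ 2 / 2 + s * r : ℝ) : EReal) := by
  rw [hfun, hv, ← EReal.coe_mul, ← EReal.coe_add]

lemma hfun_eq_top (g : ℝ → EReal) (s q v : ℝ) (hs : 0 < s) (hv : g v = ⊤) :
    hfun g s q v = ⊤ := by
  rw [hfun, hv, EReal.coe_mul_top_of_pos hs, EReal.add_top_of_ne_bot (EReal.coe_ne_bot _)]

lemma hfun_zero (g : ℝ → EReal) (s q : ℝ) (h0 : g 0 = 0) : hfun g s q 0 = 0 := by
  simp [hfun, h0]

lemma exists_real_of_le (g : ℝ → EReal) (hpos : ∀ x : ℝ, 0 ≤ g x)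
    (s q u C : ℝ) (hs : 0 < s) (h : hfun g s q u ≤ (C : EReal)) :
    ∃ r : ℝ, 0 ≤ r ∧ g u = (r : EReal) ∧ -q * u + u ^ 2 / 2 + s * r ≤ C := by
  have hne : g u ≠ ⊤ := by
    intro htop
    rw [hfun_eq_top g s q u hs htop] at h
    exact (not_le.mpr (EReal.coe_lt_top C)) h
  have hnb : g u ≠ ⊥ := ne_of_gt (lt_of_lt_of_le (by simp : (⊥:EReal) < 0) (hpos u))
  refine ⟨(g u).toReal, ?_, (EReal.coe_toReal hne hnb).symm, ?_⟩
  · have := hpos u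
    rw [← EReal.coe_toReal hne hnb] at this
    exact_mod_cast this
  · rw [hfun_eq_real g s q u _ (EReal.coe_toReal hne hnb).symm] at h
    exact_mod_cast h

lemma hfun_neg (g : ℝ → EReal) (hsymm : ∀ x : ℝ, g (-x) = g x) (s q v : ℝ) :
    hfun g s (-q) (-v) = hfun g s q v := by
  rw [hfun, hfun, hsymm v]
  congr 2
  ring

lemma min_reflect (g : ℝ → EReal) (hsymm : ∀ x : ℝ, g (-x) = g x) (s q u : ℝ)
    (h : ∀ v : ℝ, hfun g s q u ≤ hfun g s q v) :
    ∀ v : ℝ, hfun g s (-q) (-u) ≤ hfun g s (-q) v := by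
  intro v
  rw [hfun_neg g hsymm s q u]
  have := h (-v)
  rwa [← hfun_neg g hsymm s q (-v), neg_neg] at this

lemma eventually_Ioo {p : ℝ → Prop} (h : ∀ᶠ v in nhdsWithin 0 (Set.Ioi (0:ℝ)), p v) :
    ∃ δ : ℝ, 0 < δ ∧ ∀ v ∈ Set.Ioo (0:ℝ) δ, p v := by
  rw [eventually_iff, mem_nhdsGT_iff_exists_Ioo_subset] at h
  obtain ⟨u, hu, hsub⟩ := h
  exact ⟨u, hu, fun v hv => hsub hv⟩

lemma b3c_bound (g : ℝ → EReal) (hc : 0 < liminf g (nhdsWithin 0 (Set.Ioi (0:ℝ)))) :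
    ∃ m δ : ℝ, 0 < m ∧ 0 < δ ∧ ∀ v ∈ Set.Ioo (0:ℝ) δ, (m : EReal) ≤ g v := by
  obtain ⟨c, hc0, hcL⟩ := exists_between hc
  have hct : c ≠ ⊤ := fun h => absurd (h ▸ hcL) (not_lt.mpr le_top)
  have hcb : c ≠ ⊥ := fun h => absurd (h ▸ hc0) (not_lt.mpr bot_le)
  have hcm : ((c.toReal : ℝ) : EReal) = c := EReal.coe_toReal hct hcb
  have hm0 : 0 < c.toReal := by
    rw [← EReal.coe_pos]; rw [hcm]; exact hc0
  have hev := Filter.eventually_lt_of_lt_liminf hcL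
  obtain ⟨δ, hδ, hδh⟩ := eventually_Ioo hev
  exact ⟨c.toReal, δ, hm0, hδ, fun v hv => by rw [hcm]; exact le_of_lt (hδh v hv)⟩

lemma gr_chord (ε : ℝ) (hε : 0 < ε) (gr g1 g2 : ℝ → ℝ)
    (hd1 : ∀ u ∈ Set.Ioo (0:ℝ) ε, HasDerivAt gr (g1 u) u)
    (hd2 : ∀ u ∈ Set.Ioo (0:ℝ) ε, HasDerivAt g1 (g2 u) u)
    (hgrpos : ∀ u ∈ Set.Ioo (0:ℝ) ε, 0 ≤ gr u)
    (hg2neg : ∀ u ∈ Set.Ioo (0:ℝ) ε, g2 u < 0) :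
    ∃ a c : ℝ, 0 < a ∧ a < ε ∧ 0 < c ∧ ∀ v ∈ Set.Ioo (0:ℝ) a, c * v ≤ gr v := by
  set a : ℝ := ε / 2 with ha
  have haε : a ∈ Set.Ioo (0:ℝ) ε := ⟨by positivity, by linarith⟩
  -- MVT helper on subintervals of (0, ε)
  have mvt : ∀ (f f' : ℝ → ℝ), (∀ u ∈ Set.Ioo (0:ℝ) ε, HasDerivAt f (f' u) u) →
      ∀ x y : ℝ, 0 < x → x < y → y < ε →
      ∃ ξ ∈ Set.Ioo x y, f' ξ * (y - x) = f y - f x := by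
    intro f f' hd x y hx hxy hy
    have hIcc : Set.Icc x y ⊆ Set.Ioo (0:ℝ) ε := fun z hz =>
      ⟨lt_of_lt_of_le hx hz.1, lt_of_le_of_lt hz.2 hy⟩
    obtain ⟨ξ, hξ, heq⟩ := exists_hasDerivAt_eq_slope f f' hxy
      (fun z hz => (hd z (hIcc hz)).continuousAt.continuousWithinAt)
      (fun z hz => hd z (hIcc (Set.Ioo_subset_Icc_self hz)))
    refine ⟨ξ, hξ, ?_⟩
    rw [eq_div_iff (ne_of_gt (by linarith))] at heq
    linarith [heq]
  -- gr is positive on (0, ε)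
  have grpos : ∀ b ∈ Set.Ioo (0:ℝ) ε, 0 < gr b := by
    intro b hb
    rcases lt_or_eq_of_le (hgrpos b hb) with h | h
    · exact h
    -- gr b = 0 : local min, g1 b = 0, contradiction
    exfalso
    have hlocal : IsLocalMin gr b := by
      refine Filter.eventually_of_mem (isOpen_Ioo.mem_nhds hb) (fun v hv => ?_)
      rw [← h]; exact hgrpos v hv
    have hg1b : g1 b = 0 := hlocal.hasDerivAt_eq_zero (hd1 b hb)
    set y : ℝ := (b + ε) / 2 with hy
    have hby : b < y := by rw [hy]; linarith [hb.2]
    have hyε : y < ε := by rw [hy]; linarith [hb.2]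
    obtain ⟨ξ, hξ, hξeq⟩ := mvt gr g1 hd1 b y hb.1 hby hyε
    have hξε : ξ ∈ Set.Ioo (0:ℝ) ε := ⟨lt_trans hb.1 hξ.1, lt_trans hξ.2 hyε⟩
    obtain ⟨ζ, hζ, hζeq⟩ := mvt g1 g2 hd2 b ξ hb.1 hξ.1 hξε.2
    have hζε : ζ ∈ Set.Ioo (0:ℝ) ε := ⟨lt_trans hb.1 hζ.1, lt_trans hζ.2 hξε.2⟩
    have h2 : g2 ζ < 0 := hg2neg ζ hζε
    -- g1 ξ = g2 ζ (ξ - b) < 0, so gr y - gr b = g1 ξ (y - b) < 0, but gr y ≥ 0 = gr b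
    have hgy : 0 ≤ gr y := hgrpos y ⟨by linarith [hb.1], hyε⟩
    have he1 : g1 ξ = g2 ζ * (ξ - b) := by rw [hg1b] at hζeq; linarith
    have hg1ξ : g1 ξ < 0 := by
      rw [he1]; exact mul_neg_of_neg_of_pos h2 (by linarith [hζ.1, hζ.2])
    have := mul_neg_of_neg_of_pos hg1ξ (show (0:ℝ) < y - b by linarith)
    linarith [hξeq, hgy]
  refine ⟨a, gr a / a, haε.1, haε.2, div_pos (grpos a haε) haε.1, ?_⟩
  intro v hv
  have hva : v < a := hv.2
  have hv0 : 0 < v := hv.1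
  rcases le_or_gt (gr a) (gr v) with hcase | hcase
  · -- gr v ≥ gr a ≥ (gr a / a) * v since v ≤ a
    have h1 : gr a / a * v ≤ gr a := by
      rw [div_mul_eq_mul_div, div_le_iff₀ haε.1]
      nlinarith [grpos a haε]
    linarith
  · -- chord argument
    set m : ℝ := (gr a - gr v) / (a - v) with hm
    have hm0 : 0 < m := div_pos (by linarith) (by linarith)
    have key : m * v ≤ gr v := by
      refine le_of_forall_pos_le_add (fun η hη => ?_)
      set v' : ℝ := min (v / 2) (η / m) with hv'
      have hv'0 : 0 < v' := lt_min (by linarith) (div_pos hη hm0)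
      have hv'v : v' < v := lt_of_le_of_lt (min_le_left _ _) (by linarith)
      -- MVT gr on [v', v]
      obtain ⟨ξ, hξ, hξeq⟩ := mvt gr g1 hd1 v' v hv'0 hv'v (by linarith [haε.2])
      -- MVT gr on [v, a]
      obtain ⟨ξ₁, hξ₁, hξ₁eq⟩ := mvt gr g1 hd1 v a hv0 hva haε.2
      -- g1 ξ > g1 ξ₁ via MVT of g1 on [ξ, ξ₁]
      have hξξ₁ : ξ < ξ₁ := lt_trans hξ.2 hξ₁.1
      obtain ⟨ζ, hζ, hζeq⟩ := mvt g1 g2 hd2 ξ ξ₁ (lt_trans hv'0 hξ.1) hξξ₁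
        (lt_trans hξ₁.2 haε.2)
      have hζε : ζ ∈ Set.Ioo (0:ℝ) ε :=
        ⟨lt_trans (lt_trans hv'0 hξ.1) hζ.1, lt_trans (lt_trans hζ.2 hξ₁.2) haε.2⟩
      have h2 : g2 ζ < 0 := hg2neg ζ hζε
      have hg1ge : g1 ξ₁ ≤ g1 ξ := by nlinarith [hζeq, hζ.1, hζ.2]
      have hg1ξ₁ : g1 ξ₁ = m := by
        rw [hm]; rw [eq_div_iff (ne_of_gt (by linarith : (0:ℝ) < a - v))]
        linarith [hξ₁eq]
      -- gr v - gr v' = g1 ξ (v - v') ≥ m (v - v')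
      have hgrv' : 0 ≤ gr v' := hgrpos v' ⟨hv'0, by linarith [haε.2]⟩
      have h3 : m * (v - v') ≤ gr v - gr v' := by
        have := hξeq
        nlinarith [hg1ge, hg1ξ₁, hv'v]
      have h4 : m * v' ≤ η := by
        have : v' ≤ η / m := min_le_right _ _
        rw [le_div_iff₀ hm0] at this
        linarith
      nlinarith [h3, hgrv', h4]
    -- m * v ≤ gr v  ⇒  (gr a / a) * v ≤ gr v
    have : (gr a - gr v) * v ≤ gr v * (a - v) := by
      rw [hm, div_mul_eq_mul_div, div_le_iff₀ (by linarith : (0:ℝ) < a - v)] at key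
      linarith [key]
    rw [div_mul_eq_mul_div, div_le_iff₀ haε.1]
    nlinarith [this]

lemma no_small_min (g : ℝ → EReal) (hsymm : ∀ x : ℝ, g (-x) = g x)
    (ε : ℝ) (gr g1 g2 : ℝ → ℝ)
    (hg : ∀ u ∈ Set.Ioo (0:ℝ) ε, g u = ((gr u : ℝ) : EReal))
    (hd1 : ∀ u ∈ Set.Ioo (0:ℝ) ε, HasDerivAt gr (g1 u) u)
    (hd2 : ∀ u ∈ Set.Ioo (0:ℝ) ε, HasDerivAt g1 (g2 u) u)
    (s : ℝ) (δ : ℝ) (hδ0 : 0 < δ) (hδε : δ ≤ ε)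
    (hneg : ∀ v ∈ Set.Ioo (0:ℝ) δ, 1 + s * g2 v < 0) :
    ∀ q u : ℝ, (∀ v : ℝ, hfun g s q u ≤ hfun g s q v) → u = 0 ∨ δ ≤ |u| := by
  -- main claim for positive u
  have key : ∀ q u : ℝ, 0 < u → u < δ → (∀ v : ℝ, hfun g s q u ≤ hfun g s q v) → False := by
    intro q u hu0 huδ hmin
    set H : ℝ → ℝ := fun v => -q * v + v ^ 2 / 2 + s * gr v with hH
    set H1 : ℝ → ℝ := fun v => -q + v + s * g1 v with hH1
    have hsub : Set.Ioo (0:ℝ) δ ⊆ Set.Ioo 0 ε := Set.Ioo_subset_Ioo le_rfl hδε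
    have huε : u ∈ Set.Ioo (0:ℝ) ε := hsub ⟨hu0, huδ⟩
    have hHval : ∀ v ∈ Set.Ioo (0:ℝ) ε, hfun g s q v = ((H v : ℝ) : EReal) := by
      intro v hv; exact hfun_eq_real g s q v (gr v) (hg v hv)
    have hDH : ∀ v ∈ Set.Ioo (0:ℝ) ε, HasDerivAt H (H1 v) v := by
      intro v hv
      have h1 : HasDerivAt (fun v : ℝ => -q * v) (-q) v := by
        simpa using (hasDerivAt_id v).const_mul (-q)
      have h2 : HasDerivAt (fun v : ℝ => v ^ 2 / 2) v v := by
        have := (hasDerivAt_pow 2 v).div_const 2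
        simpa using this
      have h3 : HasDerivAt (fun v : ℝ => s * gr v) (s * g1 v) v := (hd1 v hv).const_mul s
      simpa [hH, hH1, Pi.add_def] using (h1.add h2).add h3
    have hDH1 : ∀ v ∈ Set.Ioo (0:ℝ) ε, HasDerivAt H1 (1 + s * g2 v) v := by
      intro v hv
      have h1 : HasDerivAt (fun v : ℝ => -q + v) 1 v := by
        simpa [Pi.add_def] using (hasDerivAt_const v (-q)).add (hasDerivAt_id v)
      have h3 : HasDerivAt (fun v : ℝ => s * g1 v) (s * g2 v) v := (hd2 v hv).const_mul s
      simpa [hH1, Pi.add_def] using h1.add h3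
    -- local min ⇒ H1 u = 0
    have hmem : Set.Ioo (0:ℝ) ε ∈ nhds u := isOpen_Ioo.mem_nhds huε
    have hlocal : IsLocalMin H u := by
      refine Filter.eventually_of_mem hmem (fun v hv => ?_)
      have := hmin v
      rw [hHval u huε, hHval v hv] at this
      exact_mod_cast this
    have hH1u : H1 u = 0 := hlocal.hasDerivAt_eq_zero (hDH u huε)
    -- w
    set w : ℝ := (u + δ) / 2 with hw
    have huw : u < w := by rw [hw]; linarith
    have hwδ : w < δ := by rw [hw]; linarith
    have hwε : w ∈ Set.Ioo (0:ℝ) ε := hsub ⟨by linarith, hwδ⟩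
    have hIcc : Set.Icc u w ⊆ Set.Ioo (0:ℝ) ε := fun x hx =>
      ⟨lt_of_lt_of_le hu0 hx.1, lt_of_le_of_lt hx.2 hwε.2⟩
    have hcont : ContinuousOn H (Set.Icc u w) := fun x hx =>
      (hDH x (hIcc hx)).continuousAt.continuousWithinAt
    obtain ⟨ξ, hξ, hξeq⟩ := exists_hasDerivAt_eq_slope H H1 huw hcont
      (fun x hx => hDH x (hIcc (Set.Ioo_subset_Icc_self hx)))
    -- MVT for H1 on [u, ξ]
    have hcont1 : ContinuousOn H1 (Set.Icc u ξ) := fun x hx =>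
      (hDH1 x (hIcc ⟨hx.1, le_trans hx.2 (le_of_lt hξ.2)⟩)).continuousAt.continuousWithinAt
    obtain ⟨ζ, hζ, hζeq⟩ := exists_hasDerivAt_eq_slope H1 (fun v => 1 + s * g2 v) hξ.1 hcont1
      (fun x hx => hDH1 x (hIcc ⟨le_of_lt hx.1, le_of_lt (lt_of_lt_of_le hx.2 (le_of_lt hξ.2))⟩))
    have hζδ : ζ ∈ Set.Ioo (0:ℝ) δ :=
      ⟨lt_trans hu0 hζ.1, lt_trans (lt_trans hζ.2 hξ.2) hwδ⟩
    have hζneg : 1 + s * g2 ζ < 0 := hneg ζ hζδ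
    -- derive H w < H u
    have hξu : u < ξ := hξ.1
    have hH1ξ : H1 ξ < 0 := by
      have hne : ξ - u ≠ 0 := ne_of_gt (by linarith)
      rw [eq_div_iff hne] at hζeq
      have : H1 ξ - H1 u = (1 + s * g2 ζ) * (ξ - u) := hζeq.symm
      nlinarith [this, hH1u, hξu]
    have hHwu : H w < H u := by
      have hne : w - u ≠ 0 := ne_of_gt (by linarith)
      rw [eq_div_iff hne] at hξeq
      have : H w - H u = H1 ξ * (w - u) := hξeq.symm
      nlinarith [this, huw]
    have hle : H u ≤ H w := by
      have := hmin w
      rw [hHval u huε, hHval w hwε] at this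
      exact_mod_cast this
    linarith
  intro q u hmin
  by_cases hu : u = 0
  · exact Or.inl hu
  · right
    by_contra habs
    push_neg at habs
    rcases lt_trichotomy u 0 with h | h | h
    · exact key (-q) (-u) (by linarith) (by rw [abs_of_neg h] at habs; linarith)
        (min_reflect g hsymm s q u hmin)
    · exact hu h
    · exact key q u h (by rw [abs_of_pos h] at habs; linarith) hmin


lemma linear_from_chord (g : ℝ → EReal) (hpos : ∀ x : ℝ, 0 ≤ g x)
    (ε : ℝ) (hε : 0 < ε) (gr g1 g2 : ℝ → ℝ)
    (hg : ∀ u ∈ Set.Ioo (0:ℝ) ε, g u = ((gr u : ℝ) : EReal))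
    (hd1 : ∀ u ∈ Set.Ioo (0:ℝ) ε, HasDerivAt gr (g1 u) u)
    (hd2 : ∀ u ∈ Set.Ioo (0:ℝ) ε, HasDerivAt g1 (g2 u) u)
    (δ' : ℝ) (hδ' : 0 < δ') (hneg : ∀ v ∈ Set.Ioo (0:ℝ) δ', g2 v < 0) :
    ∃ m δ : ℝ, 0 < m ∧ 0 < δ ∧ ∀ v ∈ Set.Ioo (0:ℝ) δ, ((m * v : ℝ) : EReal) ≤ g v := by
  set δ₁ : ℝ := min δ' ε with hδ₁
  have hδ₁0 : 0 < δ₁ := lt_min hδ' hε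
  have hsub : Set.Ioo (0:ℝ) δ₁ ⊆ Set.Ioo (0:ℝ) ε :=
    Set.Ioo_subset_Ioo le_rfl (min_le_right _ _)
  obtain ⟨a, c, ha0, haδ, hc0, hch⟩ := gr_chord δ₁ hδ₁0 gr g1 g2
    (fun u hu => hd1 u (hsub hu)) (fun u hu => hd2 u (hsub hu))
    (fun u hu => by
      have := hpos u; rw [hg u (hsub hu)] at this; exact_mod_cast this)
    (fun u hu => hneg u ⟨hu.1, lt_of_lt_of_le hu.2 (min_le_left _ _)⟩)
  refine ⟨c, a, hc0, ha0, ?_⟩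
  intro v hv
  have hvε : v ∈ Set.Ioo (0:ℝ) ε := hsub ⟨hv.1, lt_trans hv.2 haδ⟩
  rw [hg v hvε]
  exact_mod_cast hch v hv

lemma part2 (g : ℝ → EReal)
    (hsymm : ∀ x : ℝ, g (-x) = g x) (h0 : g 0 = 0)
    (hproper : ∃ u : ℝ, u ≠ 0 ∧ g u ≠ ⊤)
    (hpos : ∀ x : ℝ, 0 ≤ g x)
    (s : ℝ) (hs : 0 < s)
    (m δ : ℝ) (hm : 0 < m) (hδ : 0 < δ)
    (hbound : ∀ v ∈ Set.Ioo (0:ℝ) δ, ((m * v : ℝ) : EReal) ≤ g v) :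
    ∃ q₀ : ℝ, 0 < q₀ ∧
      (∀ q : ℝ, (∀ v : ℝ, hfun g s q 0 ≤ hfun g s q v) ↔ |q| ≤ q₀) ∧
      (∀ q : ℝ, |q| < q₀ → ∀ u : ℝ, (∀ v : ℝ, hfun g s q u ≤ hfun g s q v) → u = 0) := by
  have hnb : ∀ x : ℝ, g x ≠ ⊥ := fun x =>
    ne_of_gt (lt_of_lt_of_le (by simp : (⊥:EReal) < 0) (hpos x))
  have habsg : ∀ v : ℝ, g |v| = g v := by
    intro v
    rcases abs_choice v with h | h
    · rw [h]
    · rw [h, hsymm]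
  -- the candidate positive element of T
  set t₁ : ℝ := min (δ/2) (s*m) with ht₁def
  have ht₁ : 0 < t₁ := lt_min (by linarith) (mul_pos hs hm)
  have hPt₁ : ∀ v : ℝ, 0 < v → ((t₁*v : ℝ) : EReal) ≤ ((v^2/2 : ℝ) : EReal) + (s:EReal) * g v := by
    intro v hv
    by_cases htop : g v = ⊤
    · rw [htop, EReal.coe_mul_top_of_pos hs,
        EReal.add_top_of_ne_bot (EReal.coe_ne_bot _)]
      exact le_top
    · set r := (g v).toReal with hrdef
      have hr : g v = (r : EReal) := (EReal.coe_toReal htop (hnb v)).symm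
      have hr0 : 0 ≤ r := by
        have := hpos v; rw [hr] at this; exact_mod_cast this
      rw [hr, ← EReal.coe_mul, ← EReal.coe_add]
      have : t₁ * v ≤ v^2/2 + s*r := by
        rcases le_or_gt δ v with hc | hc
        · have h1 : t₁ ≤ δ/2 := min_le_left _ _
          nlinarith [mul_nonneg (le_of_lt hs) hr0]
        · have h2 := hbound v ⟨hv, hc⟩
          rw [hr] at h2
          have h2' : m * v ≤ r := by exact_mod_cast h2
          have h1 : t₁ ≤ s*m := min_le_right _ _
          nlinarith [mul_le_mul_of_nonneg_right h1 hv.le,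
            mul_le_mul_of_nonneg_left h2' hs.le, sq_nonneg v]
      exact_mod_cast this
  -- the set T
  set T : Set ℝ := {t : ℝ | 0 ≤ t ∧ ∀ v : ℝ, 0 < v →
    ((t*v : ℝ) : EReal) ≤ ((v^2/2 : ℝ) : EReal) + (s:EReal) * g v} with hTdef
  have ht₁T : t₁ ∈ T := ⟨le_of_lt ht₁, hPt₁⟩
  have hTne : T.Nonempty := ⟨t₁, ht₁T⟩
  -- bounded above, using the proper point
  obtain ⟨w', hw'0, hw't⟩ := hproper
  have hw : 0 < |w'| := abs_pos.mpr hw'0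
  have hgw : g |w'| ≠ ⊤ := by rw [habsg]; exact hw't
  set w : ℝ := |w'| with hwdef
  set G : ℝ := (g w).toReal with hGdef
  have hG : g w = (G : EReal) := (EReal.coe_toReal hgw (hnb w)).symm
  have hG0 : 0 ≤ G := by
    have := hpos w; rw [hG] at this; exact_mod_cast this
  have hbdd : BddAbove T := by
    refine ⟨(w^2/2 + s*G)/w, fun t ht => ?_⟩
    have h1 := ht.2 w hw
    rw [hG, ← EReal.coe_mul, ← EReal.coe_add] at h1
    have h2 : t*w ≤ w^2/2 + s*G := by exact_mod_cast h1
    rw [le_div_iff₀ hw]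
    exact h2
  set q₀ : ℝ := sSup T with hq₀def
  have hq₀t₁ : t₁ ≤ q₀ := le_csSup hbdd ht₁T
  have hq₀pos : 0 < q₀ := lt_of_lt_of_le ht₁ hq₀t₁
  have hq₀mem : q₀ ∈ T := by
    refine ⟨le_of_lt hq₀pos, fun v hv => ?_⟩
    by_cases htop : g v = ⊤
    · rw [htop, EReal.coe_mul_top_of_pos hs,
        EReal.add_top_of_ne_bot (EReal.coe_ne_bot _)]
      exact le_top
    · set r := (g v).toReal with hrdef
      have hr : g v = (r : EReal) := (EReal.coe_toReal htop (hnb v)).symm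
      have hub : ∀ t ∈ T, t ≤ (v^2/2 + s*r)/v := by
        intro t ht
        have h1 := ht.2 v hv
        rw [hr, ← EReal.coe_mul, ← EReal.coe_add] at h1
        have h2 : t*v ≤ v^2/2 + s*r := by exact_mod_cast h1
        rw [le_div_iff₀ hv]; exact h2
      have h3 : q₀ ≤ (v^2/2 + s*r)/v := csSup_le hTne hub
      rw [le_div_iff₀ hv] at h3
      rw [hr, ← EReal.coe_mul, ← EReal.coe_add]
      exact_mod_cast h3
  refine ⟨q₀, hq₀pos, ?_, ?_⟩
  · intro q
    constructor
    · intro hmin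
      refine le_csSup hbdd ⟨abs_nonneg q, fun v hv => ?_⟩
      set v' : ℝ := if 0 ≤ q then v else -v with hv'def
      have hgv' : g v' = g v := by
        rcases le_or_gt 0 q with h | h
        · simp [hv'def, if_pos h]
        · simp [hv'def, if_neg (not_le.mpr h), hsymm]
      have heq : hfun g s q v' = ((-(|q| *v) + v^2/2 : ℝ) : EReal) + (s:EReal) * g v := by
        rw [hfun, hgv']
        congr 2
        rcases le_or_gt 0 q with h | h
        · rw [hv'def, if_pos h, abs_of_nonneg h]; ring
        · rw [hv'def, if_neg (not_le.mpr h), abs_of_neg h]; ring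
      have h1 := hmin v'
      rw [hfun_zero g s q h0, heq] at h1
      by_cases htop : g v = ⊤
      · rw [htop, EReal.coe_mul_top_of_pos hs,
          EReal.add_top_of_ne_bot (EReal.coe_ne_bot _)]
        exact le_top
      · set r := (g v).toReal with hrdef
        have hr : g v = (r : EReal) := (EReal.coe_toReal htop (hnb v)).symm
        rw [hr, ← EReal.coe_mul, ← EReal.coe_add] at h1 ⊢
        have h2 : (0:ℝ) ≤ -(|q| *v) + v^2/2 + s*r := by exact_mod_cast h1
        have : |q| *v ≤ v^2/2 + s*r := by linarith
        exact_mod_cast this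
    · intro hq v
      rw [hfun_zero g s q h0]
      by_cases htop : g v = ⊤
      · rw [hfun_eq_top g s q v hs htop]; exact le_top
      · set r := (g v).toReal with hrdef
        have hr : g v = (r : EReal) := (EReal.coe_toReal htop (hnb v)).symm
        have hr0 : 0 ≤ r := by
          have := hpos v; rw [hr] at this; exact_mod_cast this
        rw [hfun_eq_real g s q v r hr]
        by_cases hv0 : v = 0
        · subst hv0
          have : (0:ℝ) ≤ -q*0 + 0^2/2 + s*r := by
            nlinarith [mul_nonneg (le_of_lt hs) hr0]
          exact_mod_cast this
        · have hvpos : 0 < |v| := abs_pos.mpr hv0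
          have h2 := hq₀mem.2 |v| hvpos
          rw [habsg v, hr, ← EReal.coe_mul, ← EReal.coe_add] at h2
          have h2' : q₀*|v| ≤ |v|^2/2 + s*r := by exact_mod_cast h2
          rw [sq_abs] at h2'
          have h3 : (0:ℝ) ≤ -q*v + v^2/2 + s*r := by
            have h4 : -(q*v) ≥ -(|q| *|v|) := by
              rw [← abs_mul]; exact neg_le_neg (le_abs_self _)
            have h5 : |q| *|v| ≤ q₀*|v| :=
              mul_le_mul_of_nonneg_right hq (abs_nonneg v)
            nlinarith
          exact_mod_cast h3
  · intro q hq u hmin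
    by_contra hu
    have h1 := hmin 0
    rw [hfun_zero g s q h0] at h1
    obtain ⟨r, hr0, hgur, hineq⟩ := exists_real_of_le g hpos s q u 0 hs
      (by rw [EReal.coe_zero]; exact h1)
    have hupos : 0 < |u| := abs_pos.mpr hu
    have h2 := hq₀mem.2 |u| hupos
    rw [habsg u, hgur, ← EReal.coe_mul, ← EReal.coe_add] at h2
    have h2' : q₀*|u| ≤ |u|^2/2 + s*r := by exact_mod_cast h2
    rw [sq_abs] at h2'
    have h3 : q*u ≤ |q| *|u| := by rw [← abs_mul]; exact le_abs_self _
    have h4 : |q| *|u| < q₀*|u| := mul_lt_mul_of_pos_right hq hupos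
    linarith

set_option maxHeartbeats 1000000 in

set_option maxHeartbeats 1000000 in
lemma part1c (g : ℝ → EReal)
    (hsymm : ∀ x : ℝ, g (-x) = g x) (h0 : g 0 = 0)
    (hproper : ∃ u : ℝ, u ≠ 0 ∧ g u ≠ ⊤)
    (hpos : ∀ x : ℝ, 0 ≤ g x)
    (s : ℝ) (hs : 0 < s)
    (m δ : ℝ) (hm : 0 < m) (hδ : 0 < δ)
    (hbound : ∀ v ∈ Set.Ioo (0:ℝ) δ, (m : EReal) ≤ g v) :
    ∃ u₀ : ℝ, 0 < u₀ ∧ ∀ q u : ℝ,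
      (∀ v : ℝ, hfun g s q u ≤ hfun g s q v) → u = 0 ∨ u₀ ≤ |u| := by
  have hnb : ∀ x : ℝ, g x ≠ ⊥ := fun x =>
    ne_of_gt (lt_of_lt_of_le (by simp : (⊥:EReal) < 0) (hpos x))
  have habsg : ∀ v : ℝ, g |v| = g v := by
    intro v
    rcases abs_choice v with h | h
    · rw [h]
    · rw [h, hsymm]
  obtain ⟨w', hw'0, hw't⟩ := hproper
  set w : ℝ := |w'| with hwdef
  have hw : 0 < w := abs_pos.mpr hw'0
  have hgw : g w ≠ ⊤ := by rw [hwdef, habsg]; exact hw't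
  set G : ℝ := (g w).toReal with hGdef
  have hG : g w = (G : EReal) := (EReal.coe_toReal hgw (hnb w)).symm
  have hG0 : 0 ≤ G := by
    have := hpos w; rw [hG] at this; exact_mod_cast this
  set Q : ℝ := (w^2 + 2*s*G + 1)/w with hQdef
  have hQ : 0 < Q := by positivity
  set u₀ : ℝ := min (min (w/2) δ) (s*m/Q) with hu₀def
  have hu₀ : 0 < u₀ := lt_min (lt_min (by linarith) hδ) (by positivity)
  refine ⟨u₀, hu₀, ?_⟩
  intro q u hmin
  by_cases hu : u = 0
  · exact Or.inl hu
  right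
  by_contra habs
  push_neg at habs
  have hu0 : 0 < |u| := abs_pos.mpr hu
  have huw : |u| < w/2 := lt_of_lt_of_le habs (le_trans (min_le_left _ _) (min_le_left _ _))
  have huδ : |u| < δ := lt_of_lt_of_le habs (le_trans (min_le_left _ _) (min_le_right _ _))
  have huQ : |u| < s*m/Q := lt_of_lt_of_le habs (min_le_right _ _)
  -- compare with 0
  have h1 := hmin 0
  rw [hfun_zero g s q h0] at h1
  obtain ⟨r, hr0, hgur, hineq⟩ := exists_real_of_le g hpos s q u 0 hs
    (by rw [EReal.coe_zero]; exact h1)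
  have hmr : m ≤ r := by
    have h2 := hbound |u| ⟨hu0, huδ⟩
    rw [habsg u, hgur] at h2
    exact_mod_cast h2
  have hqu : u^2/2 + s*r ≤ q*u := by linarith
  have hu2 : 0 < u ^ 2 := by nlinarith [mul_pos hu0 hu0, sq_abs u]
  have hqupos : 0 < q*u := by nlinarith [hqu, hu2, mul_nonneg hs.le hr0, mul_le_mul_of_nonneg_left hmr hs.le, mul_pos hs hm]
  have habs_mul : q*u = |q| * |u| := by
    rw [← abs_mul]; exact (abs_of_pos hqupos).symm
  -- compare with w₁ = sign(q) * w
  set w₁ : ℝ := if 0 ≤ q then w else -w with hw₁def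
  have hgw₁ : g w₁ = (G : EReal) := by
    rcases le_or_gt 0 q with h | h
    · rw [hw₁def, if_pos h]; exact hG
    · rw [hw₁def, if_neg (not_le.mpr h), hsymm]; exact hG
  have hcomp := hmin w₁
  rw [hfun_eq_real g s q u r hgur, hfun_eq_real g s q w₁ G hgw₁] at hcomp
  have hcompr : -q*u + u^2/2 + s*r ≤ -q*w₁ + w₁^2/2 + s*G := by exact_mod_cast hcomp
  have hw₁eq : -q*w₁ = -(|q| * w) ∧ w₁^2 = w^2 := by
    rcases le_or_gt 0 q with h | h
    · rw [hw₁def, if_pos h, abs_of_nonneg h]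
      exact ⟨by ring, rfl⟩
    · rw [hw₁def, if_neg (not_le.mpr h), abs_of_neg h]
      exact ⟨by ring, by ring⟩
  -- bound |q|
  have hq_bound : |q| * w ≤ w^2 + 2*s*G := by
    have h3 : |q| * (w - |u|) ≤ w^2/2 + s*G := by
      rw [hw₁eq.1, hw₁eq.2] at hcompr
      nlinarith [hcompr, habs_mul, sq_nonneg u, mul_nonneg hs.le hr0]
    nlinarith [abs_nonneg q, huw,
      mul_le_mul_of_nonneg_left (show |u| ≤ w - |u| by linarith) (abs_nonneg q), h3]
  have hqQ : |q| < Q := by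
    rw [hQdef, lt_div_iff₀ hw]
    linarith [hq_bound]
  -- final contradiction
  have h5 : s*m ≤ |q| * |u| := by
    rw [← habs_mul]
    linarith [hqu, hu2, mul_le_mul_of_nonneg_left hmr hs.le]
  have h6 : |q| * |u| < Q * |u| := mul_lt_mul_of_pos_right hqQ hu0
  rw [lt_div_iff₀ hQ] at huQ
  linarith


/-- under Assumption B there is `s₀ ≥ 0` (which can be chosen `0` under (B3.b) or
(B3.c)) such that for every `s > s₀` there is `u₀(s) > 0` with: for all `q`, every global
minimizer `u` of `h_{q,s}` satisfies `u = 0` or `|u| ≥ u₀(s)`.  Moreover, for every `s > 0`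
there is `q₀(s) > 0` such that `u = 0` is a global minimizer of `h_{q,s}` iff `|q| ≤ q₀(s)`,
and it is the unique global minimizer whenever `|q| < q₀(s)`. -/
theorem prox_sparsity (g : ℝ → EReal)
    (hlsc : LowerSemicontinuous g)
    (hsymm : ∀ x : ℝ, g (-x) = g x)
    (h0 : g 0 = 0)
    (hproper : ∃ u : ℝ, u ≠ 0 ∧ g u ≠ ⊤)
    (hB3 : AssB3a g ∨ AssB3b g ∨ AssB3c g)
    (hpos : ∀ x : ℝ, 0 ≤ g x) :
    (∃ s₀ : ℝ, 0 ≤ s₀ ∧ ((AssB3b g ∨ AssB3c g) → s₀ = 0) ∧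
      ∀ s : ℝ, s₀ < s → ∃ u₀ : ℝ, 0 < u₀ ∧
        ∀ q u : ℝ, (∀ v : ℝ, hfun g s q u ≤ hfun g s q v) → u = 0 ∨ u₀ ≤ |u|)
    ∧ (∀ s : ℝ, 0 < s → ∃ q₀ : ℝ, 0 < q₀ ∧
        (∀ q : ℝ, (∀ v : ℝ, hfun g s q 0 ≤ hfun g s q v) ↔ |q| ≤ q₀) ∧
        (∀ q : ℝ, |q| < q₀ → ∀ u : ℝ, (∀ v : ℝ, hfun g s q u ≤ hfun g s q v) → u = 0)) := by
  have key2 : ∀ s : ℝ, 0 < s → ∃ q₀ : ℝ, 0 < q₀ ∧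
      (∀ q : ℝ, (∀ v : ℝ, hfun g s q 0 ≤ hfun g s q v) ↔ |q| ≤ q₀) ∧
      (∀ q : ℝ, |q| < q₀ → ∀ u : ℝ, (∀ v : ℝ, hfun g s q u ≤ hfun g s q v) → u = 0) := by
    intro s hs
    have hlin : ∃ m δ : ℝ, 0 < m ∧ 0 < δ ∧
        ∀ v ∈ Set.Ioo (0:ℝ) δ, ((m * v : ℝ) : EReal) ≤ g v := by
      rcases hB3 with ha | hb | hc
      · obtain ⟨ε, hε, gr, g1, g2, hg, hd1, hd2, hlim⟩ := ha
        have hLt : _ ≠ ⊤ := ne_top_of_lt hlim.2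
        have hLb : _ ≠ ⊥ := ne_of_gt hlim.1
        have hlL := EReal.coe_toReal hLt hLb
        have hl0 : (limsup (fun u => ((g2 u : ℝ) : EReal))
            (nhdsWithin 0 (Set.Ioi (0:ℝ)))).toReal < 0 := by
          have := hlim.2; rw [← hlL] at this; exact_mod_cast this
        have hev : ∀ᶠ v in nhdsWithin 0 (Set.Ioi (0:ℝ)), g2 v < 0 := by
          have hlt : limsup (fun u => ((g2 u : ℝ) : EReal))
              (nhdsWithin 0 (Set.Ioi (0:ℝ))) < (((0:ℝ) : ℝ) : EReal) := by
            rw [← hlL]; exact_mod_cast hl0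
          exact (Filter.eventually_lt_of_limsup_lt hlt).mono
            (fun v hv => by exact_mod_cast hv)
        obtain ⟨δ', hδ', hδ'h⟩ := eventually_Ioo hev
        exact linear_from_chord g hpos ε hε gr g1 g2 hg hd1 hd2 δ' hδ' hδ'h
      · obtain ⟨ε, hε, gr, g1, g2, hg, hd1, hd2, htend⟩ := hb
        have hev : ∀ᶠ v in nhdsWithin 0 (Set.Ioi (0:ℝ)), g2 v ≤ -1 :=
          htend.eventually (eventually_le_atBot _)
        obtain ⟨δ', hδ', hδ'h⟩ := eventually_Ioo hev
        exact linear_from_chord g hpos ε hε gr g1 g2 hg hd1 hd2 δ' hδ'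
          (fun v hv => lt_of_le_of_lt (hδ'h v hv) (by norm_num))
      · obtain ⟨m₀, δ₀, hm₀, hδ₀, hbb⟩ := b3c_bound g hc
        refine ⟨m₀/δ₀, δ₀, div_pos hm₀ hδ₀, hδ₀, ?_⟩
        intro v hv
        refine le_trans ?_ (hbb v hv)
        have h1 : m₀/δ₀ * v ≤ m₀ := by
          rw [div_mul_eq_mul_div, div_le_iff₀ hδ₀]
          nlinarith [hv.1, hv.2, hm₀]
        exact_mod_cast h1
    obtain ⟨m, δ, hm, hδ, hbound⟩ := hlin
    exact part2 g hsymm h0 hproper hpos s hs m δ hm hδ hbound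
  refine ⟨?_, key2⟩
  by_cases hbc : AssB3b g ∨ AssB3c g
  · refine ⟨0, le_refl 0, fun _ => rfl, ?_⟩
    intro s hs
    rcases hbc with hb | hc
    · obtain ⟨ε, hε, gr, g1, g2, hg, hd1, hd2, htend⟩ := hb
      have hev : ∀ᶠ v in nhdsWithin 0 (Set.Ioi (0:ℝ)), g2 v ≤ -(1/s) - 1 :=
        htend.eventually (eventually_le_atBot _)
      obtain ⟨δ', hδ', hδ'h⟩ := eventually_Ioo hev
      have hδ0 : 0 < min δ' ε := lt_min hδ' hε
      refine ⟨min δ' ε, hδ0,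
        no_small_min g hsymm ε gr g1 g2 hg hd1 hd2 s (min δ' ε) hδ0 (min_le_right _ _) ?_⟩
      intro v hv
      have h1 := hδ'h v ⟨hv.1, lt_of_lt_of_le hv.2 (min_le_left _ _)⟩
      have h2 : s * g2 v ≤ s * (-(1/s) - 1) := mul_le_mul_of_nonneg_left h1 hs.le
      have h3 : s * (-(1/s) - 1) = -1 - s := by
        field_simp
      linarith
    · obtain ⟨m, δ, hm, hδ, hbound⟩ := b3c_bound g hc
      exact part1c g hsymm h0 hproper hpos s hs m δ hm hδ hbound
  · have ha : AssB3a g := by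
      rcases hB3 with h | h | h
      · exact h
      · exact absurd (Or.inl h) hbc
      · exact absurd (Or.inr h) hbc
    obtain ⟨ε, hε, gr, g1, g2, hg, hd1, hd2, hlim⟩ := ha
    have hLt : _ ≠ ⊤ := ne_top_of_lt hlim.2
    have hLb : _ ≠ ⊥ := ne_of_gt hlim.1
    have hlL := EReal.coe_toReal hLt hLb
    set l : ℝ := (limsup (fun u => ((g2 u : ℝ) : EReal))
      (nhdsWithin 0 (Set.Ioi (0:ℝ)))).toReal with hldef
    have hl0 : l < 0 := by
      have := hlim.2; rw [← hlL] at this; exact_mod_cast this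
    have hev : ∀ᶠ v in nhdsWithin 0 (Set.Ioi (0:ℝ)), g2 v < l/2 := by
      have hlt : limsup (fun u => ((g2 u : ℝ) : EReal))
          (nhdsWithin 0 (Set.Ioi (0:ℝ))) < ((l/2 : ℝ) : EReal) := by
        rw [← hlL]; exact_mod_cast (by linarith : l < l/2)
      exact (Filter.eventually_lt_of_limsup_lt hlt).mono
        (fun v hv => by exact_mod_cast hv)
    obtain ⟨δ', hδ', hδ'h⟩ := eventually_Ioo hev
    have hs₀pos : (0:ℝ) < -4/l := by
      apply div_pos_iff.mpr; right; constructor <;> linarith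
    refine ⟨-4/l, le_of_lt hs₀pos, fun h => absurd h hbc, ?_⟩
    intro s hs
    have hspos : 0 < s := lt_trans hs₀pos hs
    have hδ0 : 0 < min δ' ε := lt_min hδ' hε
    refine ⟨min δ' ε, hδ0,
      no_small_min g hsymm ε gr g1 g2 hg hd1 hd2 s (min δ' ε) hδ0 (min_le_right _ _) ?_⟩
    intro v hv
    have h1 := hδ'h v ⟨hv.1, lt_of_lt_of_le hv.2 (min_le_left _ _)⟩
    have h4 : s * l < -4 := by
      rw [div_lt_iff_of_neg hl0] at hs
      linarith
    have h5 : s * g2 v < s * (l/2) := mul_lt_mul_of_pos_left h1 hspos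
    nlinarith [h4, h5]
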